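/- Let n ≥ 2. For self-adjoint endomorphisms R₁, R₂, R₃ of so(n) define tri(R₁,R₂,R₃) := tr((R₁R₂ + R₂R₁ + 2·R₁#R₂)∘R₃). Then tri is symmetric in all three arguments: tri(R_{σ(1)},R_{σ(2)},R_{σ(3)}) = tri(R₁,R₂,R₃) for every permutation σ of {1,2,3}. -/

import Mathlib

/-!
Common setup: we identify ⋀²ℝⁿ with the Lie algebra `so n` of real skew-symmetric
`n × n` matrices, sending `eᵢ ∧ eⱼ` to the rotation by `π/2` in the plane spanned by
`eᵢ, eⱼ`; the inner product on `so n` is `⟪A, B⟫ = -(1/2)·tr (A * B)`, and under this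
identification `v ∧ w` corresponds to the skew-symmetric matrix `v wᵀ - w vᵀ`, while
the wedge `A ∧ B` of two endomorphisms of `ℝⁿ` acts on a skew matrix `M` by
`M ↦ (1/2)(A M Bᵀ + B M Aᵀ)` (the unique linear extension of
`v∧w ↦ (1/2)(Av ∧ Bw + Bv ∧ Aw)`).
-/

noncomputable section

namespace BW

open Matrix

abbrev Mat (n : ℕ) := Matrix (Fin n) (Fin n) ℝ

/-- `so n`: the space of real skew-symmetric `n × n` matrices (≅ ⋀²ℝⁿ). -/
def so (n : ℕ) : Submodule ℝ (Mat n) where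
  carrier := {A | Aᵀ = -A}
  add_mem' := by
    intro A B hA hB
    simp only [Set.mem_setOf_eq] at *
    rw [Matrix.transpose_add, hA, hB, neg_add]
  zero_mem' := by simp
  smul_mem' := by
    intro c A hA
    simp only [Set.mem_setOf_eq] at *
    rw [Matrix.transpose_smul, hA, smul_neg]

variable {n : ℕ}

lemma mem_so_iff {A : Mat n} : A ∈ so n ↔ Aᵀ = -A := Iff.rfl

/-- The inner product `⟨A,B⟩ = -(1/2)·tr(AB)` on `so n`. -/
def ip (A B : so n) : ℝ := -(1/2) * Matrix.trace ((A : Mat n) * (B : Mat n))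

/-- `ip` as a linear map in the second variable. -/
def ipL (A : so n) : so n →ₗ[ℝ] ℝ where
  toFun B := ip A B
  map_add' B C := by
    simp only [ip, Submodule.coe_add, Matrix.mul_add, Matrix.trace_add]; ring
  map_smul' c B := by
    simp only [ip, SetLike.val_smul, Matrix.mul_smul, Matrix.trace_smul, smul_eq_mul,
      RingHom.id_apply]; ring

/-- The Lie bracket (matrix commutator) on `so n`. -/
def brk (A B : so n) : so n :=
  ⟨(A : Mat n) * (B : Mat n) - (B : Mat n) * (A : Mat n), by
    have hA : (A : Mat n)ᵀ = -(A : Mat n) := A.2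
    have hB : (B : Mat n)ᵀ = -(B : Mat n) := B.2
    rw [mem_so_iff, Matrix.transpose_sub, Matrix.transpose_mul, Matrix.transpose_mul, hA, hB]
    noncomm_ring⟩

/-- Auxiliary linear map underlying `A ∧ B`. -/
def wedgeAux (A B : Mat n) : Mat n →ₗ[ℝ] Mat n where
  toFun M := (1/2 : ℝ) • (A * M * Bᵀ + B * M * Aᵀ)
  map_add' M N := by
    simp only [mul_add, add_mul, smul_add]
    module
  map_smul' c M := by
    simp only [mul_smul_comm, smul_mul_assoc, RingHom.id_apply]
    module

lemma wedgeAux_mem (A B : Mat n) : ∀ M ∈ so n, wedgeAux A B M ∈ so n := by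
  intro M hM
  rw [mem_so_iff] at hM ⊢
  show ((1/2 : ℝ) • (A * M * Bᵀ + B * M * Aᵀ))ᵀ = -((1/2 : ℝ) • (A * M * Bᵀ + B * M * Aᵀ))
  rw [Matrix.transpose_smul, Matrix.transpose_add, Matrix.transpose_mul, Matrix.transpose_mul,
    Matrix.transpose_mul, Matrix.transpose_mul, Matrix.transpose_transpose,
    Matrix.transpose_transpose, hM]
  simp only [Matrix.neg_mul, Matrix.mul_neg, Matrix.mul_assoc, smul_neg, neg_add, smul_add]
  abel

/-- The wedge `A ∧ B` of two endomorphisms of ℝⁿ, as an endomorphism of `so n ≅ ⋀²ℝⁿ`: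
the unique linear map with `(A ∧ B)(v ∧ w) = (1/2)(Av ∧ Bw + Bv ∧ Aw)`. -/
def wedge (A B : Mat n) : Module.End ℝ (so n) :=
  (wedgeAux A B).restrict (p := so n) (q := so n) (wedgeAux_mem A B)

/-- The index set of pairs `i < j`. -/
def pairs (n : ℕ) : Finset (Fin n × Fin n) := Finset.univ.filter fun p => p.1 < p.2

/-- The standard basis vector `eᵢ` of ℝⁿ. -/
def evec (i : Fin n) : Fin n → ℝ := fun k => if k = i then 1 else 0

/-- `v ∧ w`, as an element of `so n ≅ ⋀²ℝⁿ`. -/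
def vwedge (v w : Fin n → ℝ) : so n :=
  ⟨Matrix.of fun i j => v i * w j - w i * v j, by
    rw [mem_so_iff]
    ext i j
    simp only [Matrix.transpose_apply, Matrix.of_apply, Matrix.neg_apply]
    ring⟩

/-- The orthonormal basis vector `eᵢ ∧ eⱼ` of `so n ≅ ⋀²ℝⁿ`. -/
def bvec (i j : Fin n) : so n := vwedge (evec i) (evec j)

/-- Hamilton's sharp product `R # S`: the self-adjoint endomorphism of `so n` determined by
`⟨(R#S)h, h⟩ = (1/2)·Σ_{α,β} ⟨[R(b_α), S(b_β)], h⟩·⟨[b_α, b_β], h⟩`,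
where `(b_α)` is the orthonormal basis `(eᵢ ∧ eⱼ)_{i<j}` of `so n`. -/
def sharp (R S : Module.End ℝ (so n)) : Module.End ℝ (so n) :=
  (1/4 : ℝ) • ∑ p ∈ pairs n, ∑ q ∈ pairs n,
    ((ipL (brk (R (bvec p.1 p.2)) (S (bvec q.1 q.2)))).smulRight
        (brk (bvec p.1 p.2) (bvec q.1 q.2))
      + (ipL (brk (bvec p.1 p.2) (bvec q.1 q.2))).smulRight
        (brk (R (bvec p.1 p.2)) (S (bvec q.1 q.2))))

/-- The right-hand side `R² + R^#` of Hamilton's ODE. -/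
def Qode (R : Module.End ℝ (so n)) : Module.End ℝ (so n) := R * R + sharp R R

/-- The coordinates `R_{ijkl} = ⟨R(eᵢ∧eⱼ), e_k∧e_l⟩` of an endomorphism of `so n`. -/
def Rcoord (R : Module.End ℝ (so n)) (i j k l : Fin n) : ℝ := ip (R (bvec i j)) (bvec k l)

/-- Self-adjointness with respect to the inner product `ip`. -/
def selfAdjEnd (R : Module.End ℝ (so n)) : Prop := ∀ X Y : so n, ip (R X) Y = ip X (R Y)

/-- A curvature operator: a self-adjoint endomorphism of `so n ≅ ⋀²ℝⁿ` satisfying the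
first Bianchi identity.  (`isCurvOp` carves out `S²_B(so n)`.) -/
def isCurvOp (R : Module.End ℝ (so n)) : Prop :=
  selfAdjEnd R ∧
    ∀ i j k l : Fin n, Rcoord R i j k l + Rcoord R j k i l + Rcoord R k i j l = 0

/-- The Ricci tensor `Ric_{ij} = Σ_k R_{ikjk}` of `R`. -/
def RicM (R : Module.End ℝ (so n)) : Mat n := Matrix.of fun i j => ∑ k, Rcoord R i k j k

/-- `λ̄ = tr(Ric)/n`. -/
def lamb (R : Module.End ℝ (so n)) : ℝ := Matrix.trace (RicM R) / (n : ℝ)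

/-- The traceless Ricci tensor `Ric₀ = Ric - (tr Ric / n)·id`. -/
def Ric0 (R : Module.End ℝ (so n)) : Mat n := RicM R - lamb R • (1 : Mat n)

/-- `σ = tr(Ric₀²)/n`. -/
def sigmaR (R : Module.End ℝ (so n)) : ℝ := Matrix.trace (Ric0 R * Ric0 R) / (n : ℝ)

/-- `R_I = (λ̄/(n-1))·(id ∧ id)`, the projection of `R` onto `⟨I⟩`. -/
def RI (R : Module.End ℝ (so n)) : Module.End ℝ (so n) :=
  (lamb R / ((n : ℝ) - 1)) • wedge (1 : Mat n) (1 : Mat n)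

/-- `R_{Ric₀} = (2/(n-2))·(Ric₀ ∧ id)`, the projection of `R` onto `⟨Ric₀⟩`. -/
def RRic0 (R : Module.End ℝ (so n)) : Module.End ℝ (so n) :=
  (2 / ((n : ℝ) - 2)) • wedge (Ric0 R) (1 : Mat n)

/-- The linear map `ℓ_{a,b}(R) = R + 2(n-1)a·R_I + (n-2)b·R_{Ric₀}`. -/
def lab (a b : ℝ) (R : Module.End ℝ (so n)) : Module.End ℝ (so n) :=
  R + (2 * ((n : ℝ) - 1) * a) • RI R + (((n : ℝ) - 2) * b) • RRic0 R

/-- Positive semidefiniteness of the quadratic form of an endomorphism of `so n`. -/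
def posSemidefEnd (R : Module.End ℝ (so n)) : Prop := ∀ X : so n, 0 ≤ ip (R X) X

/-- Positive definiteness of the quadratic form of an endomorphism of `so n`. -/
def posDefEnd (R : Module.End ℝ (so n)) : Prop := ∀ X : so n, X ≠ 0 → 0 < ip (R X) X

/-- `R` is 2-nonnegative: the sum of its two smallest eigenvalues is nonnegative;
equivalently (Ky Fan), `q_R(X) + q_R(Y) ≥ 0` for all orthonormal pairs `X, Y`. -/
def twoNonneg (R : Module.End ℝ (so n)) : Prop :=
  ∀ X Y : so n, ip X X = 1 → ip Y Y = 1 → ip X Y = 0 → 0 ≤ ip (R X) X + ip (R Y) Y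

/-- The (Frobenius) norm of an endomorphism of `so n`, computed in the orthonormal
basis `(eᵢ ∧ eⱼ)_{i<j}`. -/
def endNorm (R : Module.End ℝ (so n)) : ℝ :=
  Real.sqrt (∑ p ∈ pairs n, ip (R (bvec p.1 p.2)) (R (bvec p.1 p.2)))

/-- The tangent cone `T_R C`: the closure of `{t·(S - R) : S ∈ C, t ≥ 0}`. -/
def tangCone (C : Set (Module.End ℝ (so n))) (R : Module.End ℝ (so n)) :
    Set (Module.End ℝ (so n)) :=
  {X | ∀ ε > 0, ∃ S ∈ C, ∃ t : ℝ, 0 ≤ t ∧ endNorm (X - t • (S - R)) < ε}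

/-- `C` is a closed subset of the space of endomorphisms of `so n`. -/
def isClosedSet (C : Set (Module.End ℝ (so n))) : Prop :=
  ∀ X, (∀ ε > 0, ∃ Y ∈ C, endNorm (X - Y) < ε) → X ∈ C

/-- The interior of `C` relative to the subspace `S²_B(so n)` of curvature operators. -/
def interiorCurv (C : Set (Module.End ℝ (so n))) : Set (Module.End ℝ (so n)) :=
  {X | isCurvOp X ∧ ∃ ε > 0, ∀ Y, isCurvOp Y → endNorm (Y - X) < ε → Y ∈ C}

/-- Auxiliary linear map `M ↦ g M gᵀ` on matrices. -/
def conjAux (g : Mat n) : Mat n →ₗ[ℝ] Mat n where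
  toFun M := g * M * gᵀ
  map_add' M N := by simp only [mul_add, add_mul]
  map_smul' c M := by simp only [mul_smul_comm, smul_mul_assoc, RingHom.id_apply]

/-- `⋀²g` : the action `M ↦ g M gᵀ` of `g` on `so n ≅ ⋀²ℝⁿ` (for `g` orthogonal this is
the second exterior power of `g`). -/
def conjSo (g : Mat n) : Module.End ℝ (so n) :=
  (conjAux g).restrict (p := so n) (q := so n) (fun M hM => by
    rw [mem_so_iff] at hM ⊢
    show (g * M * gᵀ)ᵀ = -(g * M * gᵀ)
    rw [Matrix.transpose_mul, Matrix.transpose_mul, Matrix.transpose_transpose, hM]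
    simp only [Matrix.neg_mul, Matrix.mul_neg, Matrix.mul_assoc])

/-- The action `g · R = (⋀²g) ∘ R ∘ (⋀²g)⁻¹` of an orthogonal matrix `g`
(whose inverse is `gᵀ`) on endomorphisms of `so n`. -/
def onAct (g : Mat n) (R : Module.End ℝ (so n)) : Module.End ℝ (so n) :=
  conjSo g * R * conjSo gᵀ

/-- Two sets are at Hausdorff distance at most `ε` from each other. -/
def hdClose (A B : Set (Module.End ℝ (so n))) (ε : ℝ) : Prop :=
  (∀ X ∈ A, ∃ Y ∈ B, endNorm (X - Y) ≤ ε) ∧ ∀ Y ∈ B, ∃ X ∈ A, endNorm (X - Y) ≤ ε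

/-- The truncation `C ∩ {‖R‖ ≤ 1}`. -/
def truncSet (C : Set (Module.End ℝ (so n))) : Set (Module.End ℝ (so n)) :=
  {R ∈ C | endNorm R ≤ 1}


lemma ipL_apply_aux (A B : so n) : ipL A B = ip A B := rfl

/-! ### Auxiliary lemmas -/

lemma ip_comm (X Y : so n) : ip X Y = ip Y X := by
  unfold ip; rw [Matrix.trace_mul_comm]

lemma brk_antisym (X Y : so n) : brk X Y = - brk Y X := by
  apply Subtype.ext
  show (X : Mat n) * Y - (Y : Mat n) * X = -((Y : Mat n) * X - (X : Mat n) * Y)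
  noncomm_ring

/-- `brk X ·` as a linear map. -/
def brkL (X : so n) : so n →ₗ[ℝ] so n where
  toFun Y := brk X Y
  map_add' Y Z := by
    apply Subtype.ext
    show (X : Mat n) * (Y + Z : Mat n) - ((Y + Z : Mat n)) * X =
      ((X : Mat n) * Y - (Y : Mat n) * X) + ((X : Mat n) * Z - (Z : Mat n) * X)
    noncomm_ring
  map_smul' c Y := by
    apply Subtype.ext
    show (X : Mat n) * (c • (Y : Mat n)) - (c • (Y : Mat n)) * X
      = c • ((X : Mat n) * Y - (Y : Mat n) * X)
    rw [Matrix.mul_smul, Matrix.smul_mul, smul_sub]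

lemma brkL_apply (X Y : so n) : brkL X Y = brk X Y := rfl

lemma ip_smul_left (c : ℝ) (X Y : so n) : ip (c • X) Y = c * ip X Y := by
  rw [ip_comm, ← ipL_apply_aux, _root_.map_smul, smul_eq_mul, ipL_apply_aux, ip_comm]

lemma ip_sum_left {ι : Type*} (s : Finset ι) (f : ι → so n) (Y : so n) :
    ip (∑ i ∈ s, f i) Y = ∑ i ∈ s, ip (f i) Y := by
  rw [ip_comm, ← ipL_apply_aux, map_sum]
  exact Finset.sum_congr rfl fun i _ => by rw [ipL_apply_aux, ip_comm]

lemma bvec_val (i j k l : Fin n) :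
    ((bvec i j : so n) : Mat n) k l
      = (if k = i ∧ l = j then (1:ℝ) else 0) - (if k = j ∧ l = i then (1:ℝ) else 0) := by
  show (evec i k * evec j l - evec j k * evec i l) = _
  unfold evec
  split_ifs with h1 h2 h2 <;> simp_all

lemma ip_bvec (X : so n) (i j : Fin n) : ip X (bvec i j) = (X : Mat n) i j := by
  have hX : (X : Mat n)ᵀ = -(X : Mat n) := X.2
  have hji : (X : Mat n) j i = -(X : Mat n) i j := by
    have := congrFun (congrFun hX i) j
    simpa [Matrix.transpose_apply] using this
  unfold ip
  rw [Matrix.trace]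
  have : ∀ k, Matrix.diag ((X : Mat n) * ((bvec i j : so n) : Mat n)) k
      = (X : Mat n) k i * (if k = j then (1:ℝ) else 0)
        - (X : Mat n) k j * (if k = i then (1:ℝ) else 0) := by
    intro k
    show ∑ m, (X : Mat n) k m * ((bvec i j : so n) : Mat n) m k = _
    simp only [bvec_val, mul_sub, Finset.sum_sub_distrib, mul_ite, mul_one, mul_zero]
    congr 1
    · rw [Finset.sum_eq_single i] <;> aesop
    · rw [Finset.sum_eq_single j] <;> aesop
  rw [Finset.sum_congr rfl fun k _ => this k]
  simp only [Finset.sum_sub_distrib, mul_ite, mul_one, mul_zero]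
  rw [Finset.sum_ite_eq' Finset.univ j (fun k => (X : Mat n) k i),
    Finset.sum_ite_eq' Finset.univ i (fun k => (X : Mat n) k j)]
  simp [hji]
  ring

lemma mem_pairs {p : Fin n × Fin n} : p ∈ pairs n ↔ p.1 < p.2 := by
  simp [pairs]

lemma sum_pairs_entry (c : Fin n × Fin n → ℝ) (k l : Fin n) :
    ((∑ p ∈ pairs n, c p • bvec p.1 p.2 : so n) : Mat n) k l =
      if k < l then c (k, l) else if l < k then -(c (l, k)) else 0 := by
  have coe1 : ((∑ p ∈ pairs n, c p • bvec p.1 p.2 : so n) : Mat n) k l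
      = ∑ p ∈ pairs n, c p * ((bvec p.1 p.2 : so n) : Mat n) k l := by
    rw [AddSubmonoidClass.coe_finset_sum]
    rw [Matrix.sum_apply]
    simp [Finset.sum_apply]
  rw [coe1]
  rcases lt_trichotomy k l with h | h | h
  · rw [if_pos h, Finset.sum_eq_single (k, l)]
    · rw [bvec_val]
      have : ¬ (k = l ∧ l = k) := fun ⟨h1, _⟩ => absurd h1 (ne_of_lt h)
      simp [this]
    · intro p hp hne
      rw [bvec_val]
      have h1 : ¬ (k = p.1 ∧ l = p.2) := by
        rintro ⟨rfl, rfl⟩; exact hne rfl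
      have h2 : ¬ (k = p.2 ∧ l = p.1) := by
        rintro ⟨rfl, rfl⟩
        exact absurd (lt_trans h (mem_pairs.mp hp)) (lt_irrefl _)
      simp [h1, h2]
    · intro hnot
      exact absurd (mem_pairs.mpr h) hnot
  · rw [if_neg (by simp [h]), if_neg (by simp [h])]
    apply Finset.sum_eq_zero
    intro p hp
    rw [bvec_val]
    have hlt := mem_pairs.mp hp
    have h1 : ¬ (k = p.1 ∧ l = p.2) := by
      rintro ⟨rfl, rfl⟩; exact absurd h (ne_of_lt hlt)
    have h2 : ¬ (k = p.2 ∧ l = p.1) := by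
      rintro ⟨rfl, rfl⟩; exact absurd h.symm (ne_of_lt hlt)
    simp [h1, h2]
  · rw [if_neg (not_lt.mpr (le_of_lt h)), if_pos h, Finset.sum_eq_single (l, k)]
    · rw [bvec_val]
      have : ¬ (k = l ∧ l = k) := fun ⟨h1, _⟩ => absurd h1.symm (ne_of_lt h)
      simp [this]
    · intro p hp hne
      rw [bvec_val]
      have h1 : ¬ (k = p.1 ∧ l = p.2) := by
        rintro ⟨rfl, rfl⟩
        exact absurd (lt_trans h (mem_pairs.mp hp)) (lt_irrefl _)
      have h2 : ¬ (k = p.2 ∧ l = p.1) := by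
        rintro ⟨rfl, rfl⟩; exact hne rfl
      simp [h1, h2]
    · intro hnot
      exact absurd (mem_pairs.mpr h) hnot

lemma so_diag_zero (X : so n) (k : Fin n) : (X : Mat n) k k = 0 := by
  have := congrFun (congrFun X.2 k) k
  simp only [Matrix.transpose_apply, Matrix.neg_apply] at this
  linarith

lemma so_skew (X : so n) (k l : Fin n) : (X : Mat n) l k = -(X : Mat n) k l := by
  have := congrFun (congrFun X.2 k) l
  simpa [Matrix.transpose_apply] using this

/-- Expansion of a skew matrix in the basis `(eᵢ ∧ eⱼ)_{i<j}`. -/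
lemma expand_so (X : so n) :
    ∑ p ∈ pairs n, ip X (bvec p.1 p.2) • bvec p.1 p.2 = X := by
  apply Subtype.ext
  ext k l
  rw [show (fun p : Fin n × Fin n => ip X (bvec p.1 p.2) • bvec p.1 p.2)
      = (fun p => ((X : Mat n) p.1 p.2) • bvec p.1 p.2) from
    funext fun p => by rw [ip_bvec]]
  rw [sum_pairs_entry (fun p => (X : Mat n) p.1 p.2) k l]
  rcases lt_trichotomy k l with h | h | h
  · rw [if_pos h]
  · rw [if_neg (by simp [h]), if_neg (by simp [h]), h, so_diag_zero]
  · rw [if_neg (not_lt.mpr (le_of_lt h)), if_pos h, so_skew X l k]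

/-- Coordinates of an element of `so n` with respect to `(eᵢ ∧ eⱼ)_{i<j}`. -/
def soEquiv' : so n ≃ₗ[ℝ] (↥(pairs n) → ℝ) where
  toFun X := fun p => (X : Mat n) p.1.1 p.1.2
  map_add' X Y := by funext p; simp
  map_smul' c X := by funext p; simp
  invFun c := ∑ p ∈ (pairs n).attach, c p • bvec p.1.1 p.1.2
  left_inv X := by
    show ∑ p ∈ (pairs n).attach, (X : Mat n) p.1.1 p.1.2 • bvec p.1.1 p.1.2 = X
    rw [Finset.sum_attach (pairs n) (fun p => (X : Mat n) p.1 p.2 • bvec p.1 p.2)]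
    rw [show (fun p : Fin n × Fin n => ((X : Mat n) p.1 p.2) • bvec p.1 p.2)
        = (fun p => ip X (bvec p.1 p.2) • bvec p.1 p.2) from
      funext fun p => by rw [ip_bvec]]
    exact expand_so X
  right_inv c := by
    funext q
    set c' : Fin n × Fin n → ℝ := fun p => if h : p ∈ pairs n then c ⟨p, h⟩ else 0 with hc'
    have : ∑ p ∈ (pairs n).attach, c p • bvec p.1.1 p.1.2
        = ∑ p ∈ pairs n, c' p • bvec p.1 p.2 := by
      rw [← Finset.sum_attach (pairs n) (fun p => c' p • bvec p.1 p.2)]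
      exact Finset.sum_congr rfl fun p _ => by simp [hc', p.2]
    show ((∑ p ∈ (pairs n).attach, c p • bvec p.1.1 p.1.2 : so n) : Mat n) q.1.1 q.1.2 = c q
    rw [this, sum_pairs_entry c' q.1.1 q.1.2, if_pos (mem_pairs.mp q.2)]
    simp [hc', mem_pairs.mp q.2]

def soBasis : Module.Basis ↥(pairs n) ℝ (so n) := Module.Basis.ofEquivFun soEquiv'

lemma soBasis_apply (p : ↥(pairs n)) : soBasis p = bvec p.1.1 p.1.2 := by
  rw [soBasis, Module.Basis.coe_ofEquivFun]
  show soEquiv'.symm (Function.update 0 p 1) = _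
  show ∑ q ∈ (pairs n).attach, Function.update (0 : ↥(pairs n) → ℝ) p 1 q • bvec q.1.1 q.1.2 = _
  rw [Finset.sum_eq_single p]
  · simp
  · intro q _ hq
    simp [Function.update_of_ne hq]
  · intro h
    exact absurd (Finset.mem_attach _ p) h

/-- Trace formula in the orthonormal basis `(eᵢ ∧ eⱼ)_{i<j}`. -/
lemma trace_formula (f : Module.End ℝ (so n)) :
    LinearMap.trace ℝ (so n) f
      = ∑ p : ↥(pairs n), ip (f (bvec p.1.1 p.1.2)) (bvec p.1.1 p.1.2) := by
  rw [LinearMap.trace_eq_matrix_trace ℝ soBasis f, Matrix.trace]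
  apply Finset.sum_congr rfl
  intro p _
  rw [Matrix.diag_apply, LinearMap.toMatrix_apply, soBasis_apply, ip_bvec]
  rfl

/-- Trace of a rank-one operator. -/
lemma trace_smulRight (f : so n →ₗ[ℝ] ℝ) (v : so n) :
    LinearMap.trace ℝ (so n) (f.smulRight v) = f v := by
  rw [trace_formula]
  have : ∀ p : ↥(pairs n), ip ((f.smulRight v) (bvec p.1.1 p.1.2)) (bvec p.1.1 p.1.2)
      = ip v (bvec p.1.1 p.1.2) * f (bvec p.1.1 p.1.2) := by
    intro p
    rw [LinearMap.smulRight_apply, ip_smul_left]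
    ring
  rw [Finset.sum_congr rfl fun p _ => this p]
  have hex : v = ∑ p : ↥(pairs n), ip v (bvec p.1.1 p.1.2) • bvec p.1.1 p.1.2 := by
    rw [Finset.univ_eq_attach,
      Finset.sum_attach (pairs n) (fun p => ip v (bvec p.1 p.2) • bvec p.1 p.2)]
    exact (expand_so v).symm
  conv_rhs => rw [hex]
  rw [map_sum]
  exact Finset.sum_congr rfl fun p _ => by rw [_root_.map_smul, smul_eq_mul]

lemma ip_sum_right {ι : Type*} (s : Finset ι) (X : so n) (f : ι → so n) :
    ip X (∑ i ∈ s, f i) = ∑ i ∈ s, ip X (f i) := by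
  rw [← ipL_apply_aux, map_sum]
  exact Finset.sum_congr rfl fun i _ => rfl

lemma ip_smul_right (c : ℝ) (X Y : so n) : ip X (c • Y) = c * ip X Y := by
  rw [← ipL_apply_aux, _root_.map_smul, smul_eq_mul, ipL_apply_aux]

lemma ip_neg_left (X Y : so n) : ip (-X) Y = - ip X Y := by
  have h : ((-X : so n) : Mat n) = -(X : Mat n) := rfl
  unfold ip
  rw [h, Matrix.neg_mul, Matrix.trace_neg]
  ring

lemma ipL_neg (X : so n) : ipL (-X) = - ipL X := by
  ext Y
  show ip (-X) Y = -(ip X Y)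
  exact ip_neg_left X Y

lemma trace_brk_aux (A B C : Mat n) :
    Matrix.trace ((A * B - B * A) * C) = - Matrix.trace ((A * C - C * A) * B) := by
  rw [Matrix.sub_mul, Matrix.sub_mul, Matrix.trace_sub, Matrix.trace_sub]
  have h1 := Matrix.trace_mul_cycle A B C
  have h2 := Matrix.trace_mul_cycle B A C
  have h3 := Matrix.trace_mul_cycle A C B
  linarith

lemma ip_brk_antisym (X Y Z : so n) : ip (brk X Y) Z = - ip (brk X Z) Y := by
  unfold ip
  rw [show ((brk X Y : so n) : Mat n) = (X : Mat n) * Y - (Y : Mat n) * X from rfl,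
    show ((brk X Z : so n) : Mat n) = (X : Mat n) * Z - (Z : Mat n) * X from rfl,
    trace_brk_aux]
  ring

/-- The fundamental trilinear expression coming from the sharp product. -/
def Phi (R S T : Module.End ℝ (so n)) : ℝ :=
  ∑ p ∈ pairs n, ∑ q ∈ pairs n,
    ip (brk (R (bvec p.1 p.2)) (S (bvec q.1 q.2))) (T (brk (bvec p.1 p.2) (bvec q.1 q.2)))

lemma key (R S T : Module.End ℝ (so n)) (p q : Fin n × Fin n) :
    ip (brk (R (bvec p.1 p.2)) (S (bvec q.1 q.2))) (T (brk (bvec p.1 p.2) (bvec q.1 q.2)))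
      = ∑ b ∈ pairs n, ∑ v ∈ pairs n, ∑ u ∈ pairs n,
          ip (S (bvec q.1 q.2)) (bvec b.1 b.2) * ip (T (bvec v.1 v.2)) (bvec u.1 u.2) *
            (ip (brk (bvec p.1 p.2) (bvec q.1 q.2)) (bvec v.1 v.2) *
              ip (brk (R (bvec p.1 p.2)) (bvec b.1 b.2)) (bvec u.1 u.2)) := by
  have e1 : brk (R (bvec p.1 p.2)) (S (bvec q.1 q.2))
      = ∑ b ∈ pairs n, ip (S (bvec q.1 q.2)) (bvec b.1 b.2) •
          brk (R (bvec p.1 p.2)) (bvec b.1 b.2) := by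
    conv_lhs => rw [show S (bvec q.1 q.2) = ∑ b ∈ pairs n,
      ip (S (bvec q.1 q.2)) (bvec b.1 b.2) • bvec b.1 b.2 from (expand_so _).symm]
    rw [show brk (R (bvec p.1 p.2)) = ⇑(brkL (R (bvec p.1 p.2))) from rfl, map_sum]
    exact Finset.sum_congr rfl fun b _ => by rw [_root_.map_smul]
  rw [e1, ip_sum_left]
  refine Finset.sum_congr rfl fun b _ => ?_
  rw [ip_smul_left]
  have e2 : T (brk (bvec p.1 p.2) (bvec q.1 q.2))
      = ∑ v ∈ pairs n, ip (brk (bvec p.1 p.2) (bvec q.1 q.2)) (bvec v.1 v.2) •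
          T (bvec v.1 v.2) := by
    conv_lhs => rw [show brk (bvec p.1 p.2) (bvec q.1 q.2) = ∑ v ∈ pairs n,
      ip (brk (bvec p.1 p.2) (bvec q.1 q.2)) (bvec v.1 v.2) • bvec v.1 v.2
      from (expand_so _).symm]
    rw [map_sum]
    exact Finset.sum_congr rfl fun v _ => by rw [_root_.map_smul]
  rw [e2, ip_sum_right, Finset.mul_sum]
  refine Finset.sum_congr rfl fun v _ => ?_
  rw [ip_smul_right]
  conv_lhs => rw [show T (bvec v.1 v.2) = ∑ u ∈ pairs n,
    ip (T (bvec v.1 v.2)) (bvec u.1 u.2) • bvec u.1 u.2 from (expand_so _).symm]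
  rw [ip_sum_right, Finset.mul_sum, Finset.mul_sum]
  refine Finset.sum_congr rfl fun u _ => ?_
  rw [ip_smul_right]
  ring

/-- Coordinate form of `Phi`. -/
def Sigma' (R S T : Module.End ℝ (so n)) : ℝ :=
  ∑ p ∈ pairs n, ∑ x ∈ pairs n ×ˢ pairs n, ∑ y ∈ pairs n ×ˢ pairs n,
    ip (S (bvec x.1.1 x.1.2)) (bvec x.2.1 x.2.2) * ip (T (bvec y.1.1 y.1.2)) (bvec y.2.1 y.2.2) *
      (ip (brk (bvec p.1 p.2) (bvec x.1.1 x.1.2)) (bvec y.1.1 y.1.2) *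
        ip (brk (R (bvec p.1 p.2)) (bvec x.2.1 x.2.2)) (bvec y.2.1 y.2.2))

lemma Phi_eq_Sigma' (R S T : Module.End ℝ (so n)) : Phi R S T = Sigma' R S T := by
  unfold Phi Sigma'
  refine Finset.sum_congr rfl fun p _ => ?_
  rw [Finset.sum_product]
  refine Finset.sum_congr rfl fun q _ => ?_
  rw [key R S T p q]
  refine Finset.sum_congr rfl fun b _ => ?_
  rw [Finset.sum_product]

lemma Sigma'_swap (R S T : Module.End ℝ (so n)) : Sigma' R S T = Sigma' R T S := by
  unfold Sigma'
  refine Finset.sum_congr rfl fun p _ => ?_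
  rw [Finset.sum_comm]
  refine Finset.sum_congr rfl fun x _ => Finset.sum_congr rfl fun y _ => ?_
  rw [ip_brk_antisym (bvec p.1 p.2) (bvec y.1.1 y.1.2) (bvec x.1.1 x.1.2),
    ip_brk_antisym (R (bvec p.1 p.2)) (bvec y.2.1 y.2.2) (bvec x.2.1 x.2.2)]
  ring

lemma Phi_swap23 (R S T : Module.End ℝ (so n)) : Phi R S T = Phi R T S := by
  rw [Phi_eq_Sigma', Sigma'_swap, ← Phi_eq_Sigma']

lemma trace_sharp_mul (R S T : Module.End ℝ (so n)) (hT : selfAdjEnd T) :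
    LinearMap.trace ℝ (so n) (sharp R S * T) = (1/2) * Phi R S T := by
  have hterm : ∀ p q : Fin n × Fin n,
      LinearMap.trace ℝ (so n)
        ((((ipL (brk (R (bvec p.1 p.2)) (S (bvec q.1 q.2)))).smulRight
            (brk (bvec p.1 p.2) (bvec q.1 q.2))
          + (ipL (brk (bvec p.1 p.2) (bvec q.1 q.2))).smulRight
            (brk (R (bvec p.1 p.2)) (S (bvec q.1 q.2)))) * T))
      = 2 * ip (brk (R (bvec p.1 p.2)) (S (bvec q.1 q.2)))
          (T (brk (bvec p.1 p.2) (bvec q.1 q.2))) := by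
    intro p q
    have h1 : ∀ (f : so n →ₗ[ℝ] ℝ) (v : so n),
        (f.smulRight v) * T = (f ∘ₗ T).smulRight v := fun f v => rfl
    rw [add_mul, map_add, h1, h1, trace_smulRight, trace_smulRight]
    show ip (brk (R (bvec p.1 p.2)) (S (bvec q.1 q.2)))
        (T (brk (bvec p.1 p.2) (bvec q.1 q.2)))
      + ip (brk (bvec p.1 p.2) (bvec q.1 q.2))
        (T (brk (R (bvec p.1 p.2)) (S (bvec q.1 q.2)))) = _
    rw [ip_comm (brk (bvec p.1 p.2) (bvec q.1 q.2)), hT]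
    ring
  unfold sharp
  rw [smul_mul_assoc, _root_.map_smul, Finset.sum_mul, map_sum, smul_eq_mul]
  unfold Phi
  rw [Finset.mul_sum, Finset.mul_sum]
  refine Finset.sum_congr rfl fun p _ => ?_
  rw [Finset.sum_mul, map_sum, Finset.mul_sum, Finset.mul_sum]
  refine Finset.sum_congr rfl fun q _ => ?_
  rw [hterm p q]
  ring

lemma sharp_comm (R S : Module.End ℝ (so n)) : sharp R S = sharp S R := by
  have hneg : ∀ (f : so n →ₗ[ℝ] ℝ) (v : so n), (-f).smulRight (-v) = f.smulRight v := by
    intro f v; ext x; simp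
  unfold sharp
  congr 1
  rw [Finset.sum_comm]
  refine Finset.sum_congr rfl fun p _ => Finset.sum_congr rfl fun q _ => ?_
  rw [brk_antisym (R (bvec q.1 q.2)) (S (bvec p.1 p.2)),
    brk_antisym (bvec q.1 q.2) (bvec p.1 p.2), ipL_neg, ipL_neg, hneg, hneg]

/-- The trilinear form `tri(R₁,R₂,R₃) = tr((R₁R₂ + R₂R₁ + 2·R₁#R₂) ∘ R₃)`. -/
def tri (R1 R2 R3 : Module.End ℝ (so n)) : ℝ :=
  LinearMap.trace ℝ ↥(so n) ((R1 * R2 + R2 * R1 + (2 : ℝ) • sharp R1 R2) * R3)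


lemma tri_expand (R S T : Module.End ℝ (so n)) :
    tri R S T = LinearMap.trace ℝ (so n) (R * S * T) + LinearMap.trace ℝ (so n) (S * R * T)
      + 2 * LinearMap.trace ℝ (so n) (sharp R S * T) := by
  unfold tri
  rw [add_mul, add_mul, map_add, map_add, smul_mul_assoc, _root_.map_smul, smul_eq_mul]

lemma tri_swap12 (R S T : Module.End ℝ (so n)) : tri R S T = tri S R T := by
  rw [tri_expand, tri_expand, sharp_comm]
  ring

lemma tri_swap23 (R S T : Module.End ℝ (so n)) (hS : selfAdjEnd S) (hT : selfAdjEnd T) :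
    tri R S T = tri R T S := by
  rw [tri_expand, tri_expand, trace_sharp_mul R S T hT, trace_sharp_mul R T S hS]
  have h1 : LinearMap.trace ℝ (so n) (R * S * T) = LinearMap.trace ℝ (so n) (T * R * S) := by
    rw [LinearMap.trace_mul_comm, ← mul_assoc]
  have h2 : LinearMap.trace ℝ (so n) (S * R * T) = LinearMap.trace ℝ (so n) (R * T * S) := by
    rw [mul_assoc, LinearMap.trace_mul_comm]
  have h3 : Phi R S T = Phi R T S := Phi_swap23 R S T
  rw [h1, h2, h3]
  ring
/-- The trilinear form `tri` is symmetric in all three arguments. -/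
theorem stmt_8 {n : ℕ} (hn : 2 ≤ n) (Rv : Fin 3 → Module.End ℝ (so n))
    (hRv : ∀ i, selfAdjEnd (Rv i)) (σ : Equiv.Perm (Fin 3)) :
    tri (Rv (σ 0)) (Rv (σ 1)) (Rv (σ 2)) = tri (Rv 0) (Rv 1) (Rv 2) := by
  have h0 := hRv 0
  have h1 := hRv 1
  have h2 := hRv 2
  set A := Rv 0
  set B := Rv 1
  set C := Rv 2
  have eACB : tri A C B = tri A B C := (tri_swap23 A B C h1 h2).symm
  have eBAC : tri B A C = tri A B C := tri_swap12 B A C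
  have eBCA : tri B C A = tri A B C := (tri_swap23 B A C h0 h2).symm.trans eBAC
  have eCAB : tri C A B = tri A B C := (tri_swap12 A C B).symm.trans eACB
  have eCBA : tri C B A = tri A B C := (tri_swap12 B C A).symm.trans eBCA
  have key3 : ∀ a b c : Fin 3, a ≠ b → a ≠ c → b ≠ c →
      tri (Rv a) (Rv b) (Rv c) = tri A B C := by
    intro a b c hab hac hbc
    fin_cases a <;> fin_cases b <;> fin_cases c <;> simp_all [A, B, C]
  exact key3 (σ 0) (σ 1) (σ 2)
    (fun h => by have := σ.injective h; simp at this)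
    (fun h => by have := σ.injective h; simp at this)
    (fun h => by have := σ.injective h; simp at this)

end BW
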